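/- Let p and q be distinct primes with p not dividing q−1. Then the number of conjugacy classes of elements of SU(p) of order exactly q none of whose eigenvalues equals 1 is (q−1) times SpCG(SU(p), Z_q), the number of conjugacy classes of special cyclic subgroups of SU(p) of order q. -/

import Mathlib

open Matrix Polynomial

section MatrixLemmas


lemma exists_diag {p q : ℕ} (hq : q ≠ 0) (M : Matrix (Fin p) (Fin p) ℂ) (hM : M ^ q = 1) :
    ∃ (d : Fin p → ℂ) (P : Matrix (Fin p) (Fin p) ℂ) (_ : Invertible P),
      M = P * diagonal d * ⅟P := by
  classical
  set f : Module.End ℂ (Fin p → ℂ) := Matrix.toLinAlgEquiv' M with hf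
  have hfq : f ^ q = 1 := by rw [hf, ← map_pow, hM, _root_.map_one]
  have hsep : (X ^ q - C (1:ℂ)).Separable :=
    separable_X_pow_sub_C 1 (by exact_mod_cast hq) one_ne_zero
  have haev : aeval f (X ^ q - C (1:ℂ)) = 0 := by
    simp [map_sub, aeval_X_pow, hfq]
  have hss : f.IsSemisimple :=
    Module.End.isSemisimple_of_squarefree_aeval_eq_zero hsep.squarefree haev
  have htop : ⨆ μ, f.eigenspace μ = ⊤ := by
    have h1 := Module.End.iSup_maxGenEigenspace_eq_top f
    have h2 : ∀ μ, f.maxGenEigenspace μ = f.eigenspace μ := fun μ =>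
      hss.isFinitelySemisimple.genEigenspace_eq_eigenspace μ (by norm_num)
    simpa [h2] using h1
  have hInt : DirectSum.IsInternal f.eigenspace :=
    (DirectSum.isInternal_submodule_iff_iSupIndep_and_iSup_eq_top _).mpr
      ⟨f.eigenspaces_iSupIndep, htop⟩
  let κ := fun μ : ℂ => Module.Free.ChooseBasisIndex ℂ (f.eigenspace μ)
  let v := fun μ : ℂ => Module.Free.chooseBasis ℂ (f.eigenspace μ)
  let b : Module.Basis ((μ : ℂ) × κ μ) ℂ (Fin p → ℂ) := hInt.collectedBasis v
  haveI : Fintype ((μ : ℂ) × κ μ) := FiniteDimensional.fintypeBasisIndex b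
  let e : ((μ : ℂ) × κ μ) ≃ Fin p := b.indexEquiv (Pi.basisFun ℂ (Fin p))
  let b' : Module.Basis (Fin p) ℂ (Fin p → ℂ) := b.reindex e
  let d : Fin p → ℂ := fun i => (e.symm i).1
  have heig : ∀ i, M.mulVec (b' i) = d i • b' i := by
    intro i
    have hmem : b' i ∈ f.eigenspace (d i) := by
      rw [show b' i = b (e.symm i) from b.reindex_apply e i]
      exact hInt.collectedBasis_mem v (e.symm i)
    have h := Module.End.mem_eigenspace_iff.mp hmem
    rw [hf] at h
    simpa [Matrix.toLinAlgEquiv'_apply] using h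
  let P := (Pi.basisFun ℂ (Fin p)).toMatrix ⇑b'
  haveI hPinv : Invertible P := (Pi.basisFun ℂ (Fin p)).invertibleToMatrix b'
  have hP : ∀ i j, P i j = b' j i := by
    intro i j
    simp [P, Module.Basis.toMatrix_apply, Pi.basisFun_repr]
  refine ⟨d, P, hPinv, ?_⟩
  have hMP : M * P = P * diagonal d := by
    ext i j
    have h1 : (M * P) i j = M.mulVec (b' j) i := by
      rw [Matrix.mul_apply, Matrix.mulVec, dotProduct]
      exact Finset.sum_congr rfl fun k _ => by rw [hP]
    rw [h1, heig j, Matrix.mul_diagonal, hP, Pi.smul_apply, smul_eq_mul, mul_comm]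
  calc M = M * P * ⅟P := by rw [mul_assoc, mul_invOf_self, mul_one]
    _ = P * diagonal d * ⅟P := by rw [hMP]

lemma diag_comm {n : ℕ} (B : Matrix (Fin n) (Fin n) ℂ[X]) :
    Matrix.diagonal (fun _ => (X : ℂ[X])) * B = B * Matrix.diagonal (fun _ => (X : ℂ[X])) := by
  ext i j
  rw [Matrix.diagonal_mul, Matrix.mul_diagonal, mul_comm]

lemma charpoly_conj {n : ℕ} (P A : Matrix (Fin n) (Fin n) ℂ) [inst : Invertible P] :
    (P * A * ⅟P).charpoly = A.charpoly := by
  let f : Matrix (Fin n) (Fin n) ℂ →+* Matrix (Fin n) (Fin n) ℂ[X] := (C : ℂ →+* ℂ[X]).mapMatrix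
  have h1 : f P * f (⅟P) = 1 := by rw [← _root_.map_mul, mul_invOf_self, _root_.map_one]
  have h2 : f (⅟P) * f P = 1 := by rw [← _root_.map_mul, invOf_mul_self, _root_.map_one]
  have hcm : ∀ B : Matrix (Fin n) (Fin n) ℂ,
      charmatrix B = Matrix.diagonal (fun _ => (X : ℂ[X])) - f B := by
    intro B; ext i j; rw [charmatrix_apply]; rfl
  have hch : charmatrix (P * A * ⅟P) = f P * charmatrix A * f (⅟P) := by
    rw [hcm, hcm]
    rw [mul_sub, sub_mul, ← diag_comm (f P)]
    rw [mul_assoc (Matrix.diagonal _), h1, mul_one]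
    rw [_root_.map_mul, _root_.map_mul, mul_assoc]
  show (charmatrix (P * A * ⅟P)).det = (charmatrix A).det
  rw [hch, Matrix.det_mul, Matrix.det_mul]
  have hdet : (f P).det * (f (⅟P)).det = 1 := by rw [← Matrix.det_mul, h1, Matrix.det_one]
  calc (f P).det * (charmatrix A).det * (f (⅟P)).det
      = (f P).det * (f (⅟P)).det * (charmatrix A).det := by ring
    _ = (charmatrix A).det := by rw [hdet, one_mul]

lemma charpoly_diag {n : ℕ} (d : Fin n → ℂ) :
    (Matrix.diagonal d).charpoly = ∏ i, (X - C (d i)) := by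
  rw [Matrix.charpoly_of_upperTriangular _ (Matrix.blockTriangular_diagonal d)]
  exact Finset.prod_congr rfl fun i _ => by rw [Matrix.diagonal_apply_eq]

lemma roots_prod_lin {n : ℕ} (d : Fin n → ℂ) :
    (∏ i, ((X : ℂ[X]) - C (d i))).roots = Multiset.map d Finset.univ.val := by
  have := Polynomial.roots_multiset_prod_X_sub_C (Multiset.map d Finset.univ.val)
  rw [← this, Multiset.map_map]
  rw [Finset.prod_eq_multiset_prod]
  rfl

lemma key_count {p q : ℕ} (hp : p.Prime) (hq : q.Prime) (hpq : ¬ p ∣ (q - 1))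
    (E : Multiset (ZMod q)) (hcard : Multiset.card E = p) (h0 : (0 : ZMod q) ∉ E)
    (k : (ZMod q)ˣ) (hE : E.map (fun a => (k : ZMod q) * a) = E) : k = 1 := by
  haveI : Fact q.Prime := ⟨hq⟩
  classical
  set c : (ZMod q)ˣ → ℕ := fun u => E.count (u : ZMod q) with hc
  have hinj : Function.Injective (fun a : ZMod q => (k : ZMod q) * a) := fun a b hab =>
    mul_left_cancel₀ k.ne_zero hab
  have hck : ∀ u, c (k * u) = c u := by
    intro u
    have h1 : E.count ((fun a : ZMod q => (k : ZMod q) * a) (u : ZMod q)) = E.count (u : ZMod q) := by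
      conv_lhs => rw [← hE]
      exact Multiset.count_map_eq_count' _ E hinj u
    simpa [hc, Units.val_mul] using h1
  have hckn : ∀ (n : ℕ) (u : (ZMod q)ˣ), c (k ^ n * u) = c u := by
    intro n
    induction n with
    | zero => intro u; rw [pow_zero, one_mul]
    | succ n ih =>
      intro u
      rw [pow_succ, mul_comm (k ^ n) k, mul_assoc, hck, ih]
  set H := Subgroup.zpowers k with hH
  have hcH : ∀ (u : (ZMod q)ˣ) (h : (ZMod q)ˣ), h ∈ H → c (u * h) = c u := by
    intro u h hh
    obtain ⟨n, hn⟩ := mem_powers_iff_mem_zpowers.mpr hh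
    rw [← hn, mul_comm, hckn]
  set d := orderOf k with hd
  -- p = sum of c over units
  have hsum0 : ∑ a : ZMod q, E.count a = p := by
    rw [← hcard, ← Multiset.toFinset_sum_count_eq E]
    refine (Finset.sum_subset (Finset.subset_univ _) ?_).symm
    intro x _ hx
    exact Multiset.count_eq_zero.mpr (by simpa using hx)
  have hsum : ∑ u : (ZMod q)ˣ, c u = p := by
    rw [← hsum0]
    rw [← Finset.add_sum_erase Finset.univ _ (Finset.mem_univ (0 : ZMod q)),
      Multiset.count_eq_zero.mpr h0, zero_add]
    refine Finset.sum_nbij' (fun u => (u : ZMod q)) (fun a => if ha : a = 0 then 1 else (Ne.isUnit ha).unit) ?_ ?_ ?_ ?_ ?_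
    · intro u _; simp [Finset.mem_erase, u.ne_zero]
    · intro a ha; exact Finset.mem_univ _
    · intro u _
      simp only [Units.ne_zero, dite_false]
      exact Units.ext (by simp)
    · intro a ha
      rw [Finset.mem_erase] at ha
      simp only [ha.1, dite_false]
      exact (Ne.isUnit ha.1).unit_spec
    · intro u _; rfl
  -- d divides the sum
  have hfib : ∀ t : (ZMod q)ˣ ⧸ H, ∑ u : {u : (ZMod q)ˣ // QuotientGroup.mk u = t}, c u.1
      = d * c (Quotient.out t) := by
    intro t
    have hconst : ∀ u : {u : (ZMod q)ˣ // QuotientGroup.mk u = t}, c u.1 = c (Quotient.out t) := by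
      rintro ⟨u, hu⟩
      have h1 : (QuotientGroup.mk (Quotient.out t) : (ZMod q)ˣ ⧸ H) = QuotientGroup.mk u := by
        rw [QuotientGroup.out_eq', hu]
      have h2 : (Quotient.out t)⁻¹ * u ∈ H := QuotientGroup.eq.mp h1
      have : u = Quotient.out t * ((Quotient.out t)⁻¹ * u) := by group
      rw [show c u = c (Quotient.out t * ((Quotient.out t)⁻¹ * u)) from by rw [← this]]
      exact hcH _ _ h2
    rw [Finset.sum_congr rfl (fun u _ => hconst u), Finset.sum_const, smul_eq_mul]
    congr 1
    rw [Finset.card_univ]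
    have e : {u : (ZMod q)ˣ // QuotientGroup.mk u = t} ≃ H :=
      { toFun := fun u => ⟨(Quotient.out t)⁻¹ * u.1, QuotientGroup.eq.mp (by rw [QuotientGroup.out_eq', u.2])⟩
        invFun := fun h => ⟨Quotient.out t * h.1, by
          rw [QuotientGroup.mk_mul_of_mem _ h.2, QuotientGroup.out_eq']⟩
        left_inv := fun u => by ext; group
        right_inv := fun h => by ext; group }
    rw [Fintype.card_congr e]; exact Fintype.card_zpowers
  have hdvd : d ∣ p := by
    rw [← hsum, ← Fintype.sum_fiberwise (QuotientGroup.mk (s := H)) c]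
    exact Finset.dvd_sum fun t _ => Dvd.intro _ (hfib t).symm
  -- conclude
  have hdq : d ∣ q - 1 := by
    have h1 := orderOf_dvd_card (x := k)
    rwa [ZMod.card_units_eq_totient, Nat.totient_prime hq] at h1
  rcases (Nat.Prime.eq_one_or_self_of_dvd hp d hdvd) with h1 | h1
  · exact orderOf_eq_one_iff.mp h1
  · exact absurd (h1 ▸ hdq) hpq

lemma diag_facts {p q : ℕ} (hq : q.Prime) {M : Matrix (Fin p) (Fin p) ℂ}
    {d : Fin p → ℂ} {P : Matrix (Fin p) (Fin p) ℂ} [hP : Invertible P]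
    (hMd : M = P * diagonal d * ⅟P) (hM : M ^ q = 1) (hs : (1:ℂ) ∉ spectrum ℂ M) :
    (∀ i, d i ^ q = 1) ∧ (∀ i, d i ≠ 1) ∧ (∀ n : ℕ, M ^ n = P * diagonal (fun i => d i ^ n) * ⅟P)
      ∧ (∀ n : ℕ, spectrum ℂ (M ^ n) = Set.range (fun i => d i ^ n)) := by
  classical
  let u : (Matrix (Fin p) (Fin p) ℂ)ˣ := ⟨P, ⅟P, mul_invOf_self P, invOf_mul_self P⟩
  have hu : (u : Matrix (Fin p) (Fin p) ℂ) = P := rfl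
  have hui : ((u⁻¹ : (Matrix (Fin p) (Fin p) ℂ)ˣ) : Matrix (Fin p) (Fin p) ℂ) = ⅟P := rfl
  have hconjpow : ∀ n : ℕ, M ^ n = P * diagonal (fun i => d i ^ n) * ⅟P := by
    intro n
    have h1 : M = (u : Matrix (Fin p) (Fin p) ℂ) * diagonal d *
        ((u⁻¹ : (Matrix (Fin p) (Fin p) ℂ)ˣ) : Matrix (Fin p) (Fin p) ℂ) := by
      rw [hu, hui, hMd]
    rw [h1, Units.conj_pow, hu, hui, diagonal_pow]
    rfl
  have hspec : ∀ n : ℕ, spectrum ℂ (M ^ n) = Set.range (fun i => d i ^ n) := by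
    intro n
    have h1 : M ^ n = (u : Matrix (Fin p) (Fin p) ℂ) * diagonal (fun i => d i ^ n) *
        ((u⁻¹ : (Matrix (Fin p) (Fin p) ℂ)ˣ) : Matrix (Fin p) (Fin p) ℂ) := by
      rw [hu, hui]; exact hconjpow n
    rw [h1, spectrum.units_conjugate]
    exact spectrum_diagonal _
  have hdq : ∀ i, d i ^ q = 1 := by
    intro i
    have h1 : diagonal (fun i => d i ^ q) = (1 : Matrix (Fin p) (Fin p) ℂ) := by
      have h2 := hconjpow q
      rw [hM] at h2
      have h3 : P * diagonal (fun i => d i ^ q) * ⅟P * P = 1 * P := by rw [← h2]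
      rw [mul_assoc, invOf_mul_self, mul_one, one_mul] at h3
      have h4 : ⅟P * (P * diagonal (fun i => d i ^ q)) = ⅟P * P := by rw [h3]
      rwa [← mul_assoc, invOf_mul_self, one_mul] at h4
    have h5 := congrFun (congrFun h1 i) i
    rwa [Matrix.diagonal_apply_eq, Matrix.one_apply_eq] at h5
  have hd1 : ∀ i, d i ≠ 1 := by
    intro i hi
    apply hs
    have h1 := hspec 1
    rw [pow_one] at h1
    rw [h1]
    exact ⟨i, by simp [hi]⟩
  exact ⟨hdq, hd1, hconjpow, hspec⟩

lemma spec_pow {p q : ℕ} (hq : q.Prime) (M : Matrix (Fin p) (Fin p) ℂ) (hM : M ^ q = 1)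
    (hs : (1:ℂ) ∉ spectrum ℂ M) (n : ℕ) (hn : ¬ q ∣ n) : (1:ℂ) ∉ spectrum ℂ (M ^ n) := by
  obtain ⟨d, P, hP, hMd⟩ := exists_diag hq.ne_zero M hM
  obtain ⟨hdq, hd1, _, hspec⟩ := diag_facts hq hMd hM hs
  rw [hspec n]
  rintro ⟨i, hi⟩
  simp only at hi
  have hod : orderOf (d i) = q := by
    rcases hq.eq_one_or_self_of_dvd (orderOf (d i)) (orderOf_dvd_of_pow_eq_one (hdq i)) with h | h
    · exact absurd (orderOf_eq_one_iff.mp h) (hd1 i)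
    · exact h
  exact hn (hod ▸ orderOf_dvd_of_pow_eq_one hi)

lemma conj_pow_mod {p q : ℕ} (hp : p.Prime) (hq : q.Prime) (hpq : ¬ p ∣ (q - 1))
    (M : Matrix (Fin p) (Fin p) ℂ) (hM : M ^ q = 1) (hs : (1:ℂ) ∉ spectrum ℂ M)
    (u : (Matrix (Fin p) (Fin p) ℂ)ˣ) (m : ℕ)
    (hconj : (u : Matrix (Fin p) (Fin p) ℂ) * M *
      ((u⁻¹ : (Matrix (Fin p) (Fin p) ℂ)ˣ) : Matrix (Fin p) (Fin p) ℂ) = M ^ m) :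
    m ≡ 1 [MOD q] := by
  classical
  haveI : Fact q.Prime := ⟨hq⟩
  haveI : NeZero q := ⟨hq.ne_zero⟩
  haveI : Nonempty (Fin p) := ⟨⟨0, hp.pos⟩⟩
  obtain ⟨d, P, hP, hMd⟩ := exists_diag hq.ne_zero M hM
  obtain ⟨hdq, hd1, hconjpow, hspec⟩ := diag_facts hq hMd hM hs
  -- m not divisible by q
  have hm0 : (m : ZMod q) ≠ 0 := by
    intro h
    have hqm : q ∣ m := (ZMod.natCast_eq_zero_iff m q).mp h
    obtain ⟨c, rfl⟩ := hqm
    have hMm : M ^ (q * c) = 1 := by rw [pow_mul, hM, one_pow]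
    rw [hMm] at hconj
    have hM1 : M = 1 := by
      have h2 : (u : Matrix (Fin p) (Fin p) ℂ) * M *
          ((u⁻¹ : (Matrix (Fin p) (Fin p) ℂ)ˣ) : Matrix (Fin p) (Fin p) ℂ) *
          (u : Matrix (Fin p) (Fin p) ℂ) = 1 * (u : Matrix (Fin p) (Fin p) ℂ) := by
        rw [hconj]
      rw [mul_assoc ((u : Matrix (Fin p) (Fin p) ℂ) * M), Units.inv_mul, mul_one, one_mul] at h2
      have h3 : ((u⁻¹ : (Matrix (Fin p) (Fin p) ℂ)ˣ) : Matrix (Fin p) (Fin p) ℂ) *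
          ((u : Matrix (Fin p) (Fin p) ℂ) * M) =
          ((u⁻¹ : (Matrix (Fin p) (Fin p) ℂ)ˣ) : Matrix (Fin p) (Fin p) ℂ) *
          (u : Matrix (Fin p) (Fin p) ℂ) := by rw [h2]
      rwa [← mul_assoc, Units.inv_mul, one_mul] at h3
    apply hs
    rw [hM1]
    rw [spectrum.mem_iff]
    simp
  -- charpoly equality
  haveI : Invertible (u : Matrix (Fin p) (Fin p) ℂ) := u.invertible
  have hcp : (M ^ m).charpoly = M.charpoly := by
    rw [← hconj]
    have h1 : (u : Matrix (Fin p) (Fin p) ℂ) * M *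
        ((u⁻¹ : (Matrix (Fin p) (Fin p) ℂ)ˣ) : Matrix (Fin p) (Fin p) ℂ) =
        (u : Matrix (Fin p) (Fin p) ℂ) * M * ⅟((u : Matrix (Fin p) (Fin p) ℂ)) := by
      rw [invOf_units]
    rw [h1]
    exact charpoly_conj _ M
  have hcpd : ∀ n : ℕ, (M ^ n).charpoly = ∏ i, (X - C (d i ^ n)) := by
    intro n
    rw [hconjpow n, charpoly_conj, charpoly_diag]
  have hroots : Multiset.map (fun i => d i ^ m) Finset.univ.val = Multiset.map d Finset.univ.val := by
    have h1 := hcpd m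
    have h2 := hcpd 1
    simp only [pow_one] at h2
    rw [hcp, h2] at h1
    have h3 := congrArg Polynomial.roots h1
    rw [roots_prod_lin, roots_prod_lin] at h3
    exact h3.symm
  -- pass to ZMod q
  set ζ : ℂ := Complex.exp (2 * Real.pi * Complex.I / q) with hζdef
  have hζ : IsPrimitiveRoot ζ q := Complex.isPrimitiveRoot_exp q hq.ne_zero
  have hζq : ζ ^ q = 1 := hζ.pow_eq_one
  have hζmod : ∀ n : ℕ, ζ ^ n = ζ ^ (n % q) := by
    intro n
    conv_lhs => rw [← Nat.mod_add_div n q]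
    rw [pow_add, pow_mul, hζq, one_pow, mul_one]
  choose a ha hza using fun i => hζ.eq_pow_of_pow_eq_one (hdq i)
  set φ : ZMod q → ℂ := fun x => ζ ^ x.val with hφdef
  have hφinj : Function.Injective φ := by
    intro x y hxy
    have := hζ.pow_inj (ZMod.val_lt x) (ZMod.val_lt y) hxy
    exact ZMod.val_injective q this
  set e : Fin p → ZMod q := fun i => (a i : ZMod q) with he
  have hde : ∀ i, d i = φ (e i) := by
    intro i
    rw [hφdef, he]
    simp only
    rw [ZMod.val_natCast, ← hζmod, hza]
  have hdem : ∀ i, d i ^ m = φ ((m : ZMod q) * e i) := by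
    intro i
    rw [hφdef, he]
    simp only
    rw [← Nat.cast_mul, ZMod.val_natCast, ← hζmod, ← hza, ← pow_mul, mul_comm (a i) m]
  set E : Multiset (ZMod q) := Multiset.map e Finset.univ.val with hE
  have hEcard : Multiset.card E = p := by rw [hE, Multiset.card_map]; simp
  have hE0 : (0 : ZMod q) ∉ E := by
    rw [hE]
    intro h
    obtain ⟨i, _, hi⟩ := Multiset.mem_map.mp h
    apply hd1 i
    rw [hde i, hi]
    simp [hφdef]
  have hEk : E.map (fun x => ((m : ZMod q)) * x) = E := by
    have h1 : Multiset.map φ (E.map (fun x => (m : ZMod q) * x)) = Multiset.map φ E := by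
      rw [hE, Multiset.map_map, Multiset.map_map, Multiset.map_map]
      exact Eq.trans (Multiset.map_congr rfl fun i _ => (hdem i).symm)
        (Eq.trans hroots (Multiset.map_congr rfl fun i _ => hde i))
    exact Multiset.map_injective hφinj h1
  -- apply key_count
  let k : (ZMod q)ˣ := (Ne.isUnit hm0).unit
  have hk : (k : ZMod q) = (m : ZMod q) := (Ne.isUnit hm0).unit_spec
  have hk1 : k = 1 := key_count hp hq hpq E hEcard hE0 k (by rw [hk]; exact hEk)
  have : (m : ZMod q) = 1 := by rw [← hk, hk1, Units.val_one]
  have h2 : (m : ZMod q) = ((1 : ℕ) : ZMod q) := by rw [this, Nat.cast_one]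
  exact (ZMod.natCast_eq_natCast_iff m 1 q).mp h2


end MatrixLemmas


lemma conj_map_map {H : Type*} [Group H] (g h : H) (F : Subgroup H) :
    Subgroup.map (MulAut.conj h).toMonoidHom (Subgroup.map (MulAut.conj g).toMonoidHom F)
      = Subgroup.map (MulAut.conj (h * g)).toMonoidHom F := by
  rw [Subgroup.map_map]
  have hcomp : ((MulAut.conj h).toMonoidHom.comp (MulAut.conj g).toMonoidHom : H →* H)
      = (MulAut.conj (h * g)).toMonoidHom := by
    ext x
    simp [MulAut.conj_apply, mul_assoc]
  rw [hcomp]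

lemma conj_map_one {H : Type*} [Group H] (F : Subgroup H) :
    Subgroup.map (MulAut.conj (1 : H)).toMonoidHom F = F := by
  ext x
  simp [MulAut.conj_apply]




noncomputable instance (n : ℕ) : Group (Matrix.specialUnitaryGroup (Fin n) ℂ) :=
  { (inferInstance : Monoid (Matrix.specialUnitaryGroup (Fin n) ℂ)) with
    inv := fun A => ⟨star A.1, by
      have hA := Matrix.mem_specialUnitaryGroup_iff.mp A.2
      rw [Matrix.mem_specialUnitaryGroup_iff]
      refine ⟨Unitary.star_mem hA.1, ?_⟩
      rw [Matrix.star_eq_conjTranspose, Matrix.det_conjTranspose, hA.2, star_one]⟩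
    inv_mul_cancel := fun A => Subtype.ext ((Unitary.mem_iff.mp
      (Matrix.mem_specialUnitaryGroup_iff.mp A.2).1).1) }


section SULemmas

variable {p q : ℕ}

local notation "G" => Matrix.specialUnitaryGroup (Fin p) ℂ

lemma su_coe_pow (g : G) (n : ℕ) :
    ((g ^ n : G) : Matrix (Fin p) (Fin p) ℂ) = (g : Matrix (Fin p) (Fin p) ℂ) ^ n := by
  induction n with
  | zero => rfl
  | succ n ih => rw [pow_succ, pow_succ, ← ih]; rfl

lemma su_coe_mul (g h : G) :
    ((g * h : G) : Matrix (Fin p) (Fin p) ℂ) =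
      (g : Matrix (Fin p) (Fin p) ℂ) * (h : Matrix (Fin p) (Fin p) ℂ) := rfl

/-- the unit of the ambient matrix ring attached to an element of `SU(p)` -/
noncomputable def su_unit (g : G) : (Matrix (Fin p) (Fin p) ℂ)ˣ :=
  ⟨(g : Matrix (Fin p) (Fin p) ℂ), ((g⁻¹ : G) : Matrix (Fin p) (Fin p) ℂ),
    by rw [← su_coe_mul, mul_inv_cancel]; rfl,
    by rw [← su_coe_mul, inv_mul_cancel]; rfl⟩

lemma su_conj_pow_eq (hp : p.Prime) (hq : q.Prime) (hpq : ¬ p ∣ (q - 1))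
    (g : G) (hord : orderOf g = q)
    (hs : (1:ℂ) ∉ spectrum ℂ (g : Matrix (Fin p) (Fin p) ℂ)) (m : ℕ)
    (hc : IsConj g (g ^ m)) : g ^ m = g := by
  obtain ⟨c, hcu⟩ := isConj_iff.mp hc
  have hM : (g : Matrix (Fin p) (Fin p) ℂ) ^ q = 1 := by
    rw [← su_coe_pow, ← hord, pow_orderOf_eq_one]; rfl
  have hconj : (su_unit c : Matrix (Fin p) (Fin p) ℂ) * (g : Matrix (Fin p) (Fin p) ℂ) *
      (((su_unit c)⁻¹ : (Matrix (Fin p) (Fin p) ℂ)ˣ) : Matrix (Fin p) (Fin p) ℂ) =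
      (g : Matrix (Fin p) (Fin p) ℂ) ^ m := by
    rw [← su_coe_pow, ← hcu]
    rfl
  have hmod := conj_pow_mod hp hq hpq _ hM hs _ m hconj
  have h2 : g ^ m = g ^ 1 := by rw [pow_eq_pow_iff_modEq, hord]; exact hmod
  rw [h2, pow_one]

lemma su_pow_order_spec (hq : q.Prime) (g : G) (hord : orderOf g = q)
    (hs : (1:ℂ) ∉ spectrum ℂ (g : Matrix (Fin p) (Fin p) ℂ)) (n : ℕ) (hn : g ^ n ≠ 1) :
    orderOf (g ^ n) = q ∧ (1:ℂ) ∉ spectrum ℂ ((g ^ n : G) : Matrix (Fin p) (Fin p) ℂ) := by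
  have hqn : ¬ q ∣ n := by
    intro hdvd
    exact hn (orderOf_dvd_iff_pow_eq_one.mp (hord ▸ hdvd))
  have hM : (g : Matrix (Fin p) (Fin p) ℂ) ^ q = 1 := by
    rw [← su_coe_pow, ← hord, pow_orderOf_eq_one]; rfl
  constructor
  · have hco : Nat.gcd q n = 1 := (Nat.Prime.coprime_iff_not_dvd hq).mpr hqn
    have hn0 : n ≠ 0 := by rintro rfl; exact hn (pow_zero g)
    rw [orderOf_pow' g hn0, hord, hco, Nat.div_one]
  · rw [su_coe_pow]
    exact spec_pow hq _ hM hs n hqn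

lemma su_mem_zpowers_nat {g x : G} (hq : q.Prime) (hord : orderOf g = q)
    (hx : x ∈ Subgroup.zpowers g) : ∃ n : ℕ, g ^ n = x := by
  have hfin : IsOfFinOrder g := by
    rw [← orderOf_pos_iff, hord]; exact hq.pos
  obtain ⟨n, hn⟩ := hfin.mem_powers_iff_mem_zpowers.mpr hx
  exact ⟨n, hn⟩

end SULemmas

/-- A subgroup of `SU(n)` is special (for order `m`) if it is cyclic of order `m` and
no non-identity element of it has `1` as an eigenvalue. -/
def IsSpecialSubgroup {n : ℕ} (m : ℕ)
    (F : Subgroup (Matrix.specialUnitaryGroup (Fin n) ℂ)) : Prop :=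
  IsCyclic F ∧ Nat.card F = m ∧
    ∀ g : Matrix.specialUnitaryGroup (Fin n) ℂ, g ∈ F → g ≠ 1 →
      (1 : ℂ) ∉ spectrum ℂ (g : Matrix (Fin n) (Fin n) ℂ)

/-- `SpCG n m` is the number of conjugacy classes of special cyclic subgroups of order `m`
in `SU(n)`. -/
noncomputable def SpCG (n m : ℕ) : ℕ :=
  Nat.card (Quot fun
      (F₁ F₂ : {F : Subgroup (Matrix.specialUnitaryGroup (Fin n) ℂ) // IsSpecialSubgroup m F}) =>
    ∃ g : Matrix.specialUnitaryGroup (Fin n) ℂ,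
      Subgroup.map (MulAut.conj g).toMonoidHom F₁.1 = F₂.1)


section SubgroupLemmas
variable {p q : ℕ}
local notation "G" => Matrix.specialUnitaryGroup (Fin p) ℂ

lemma special_of_gen (hq : q.Prime) (g : G) (hord : orderOf g = q)
    (hs : (1:ℂ) ∉ spectrum ℂ (g : Matrix (Fin p) (Fin p) ℂ)) :
    IsSpecialSubgroup q (Subgroup.zpowers g) := by
  have hcyc : IsCyclic ↥(Subgroup.zpowers g) := by
    constructor
    refine ⟨⟨g, Subgroup.mem_zpowers g⟩, ?_⟩
    rintro ⟨y, hy⟩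
    obtain ⟨z, hz⟩ := Subgroup.mem_zpowers_iff.mp hy
    exact Subgroup.mem_zpowers_iff.mpr
      ⟨z, Subtype.ext (by rw [SubgroupClass.coe_zpow]; exact hz)⟩
  refine ⟨hcyc, by rw [Nat.card_zpowers, hord], ?_⟩
  intro x hx hx1
  obtain ⟨n, rfl⟩ := su_mem_zpowers_nat hq hord hx
  exact (su_pow_order_spec hq g hord hs n hx1).2

lemma exists_gen (hq : q.Prime) (F : Subgroup G) (hF : IsSpecialSubgroup q F) :
    ∃ g : G, Subgroup.zpowers g = F ∧ orderOf g = q ∧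
      (1:ℂ) ∉ spectrum ℂ (g : Matrix (Fin p) (Fin p) ℂ) := by
  obtain ⟨hcyc, hcard, hspec⟩ := hF
  obtain ⟨x, hx⟩ := hcyc.exists_generator
  have hzp : Subgroup.zpowers (x : G) = F := by
    apply le_antisymm
    · exact (Subgroup.zpowers_le).mpr x.2
    · intro y hy
      obtain ⟨z, hz⟩ := Subgroup.mem_zpowers_iff.mp (hx ⟨y, hy⟩)
      refine Subgroup.mem_zpowers_iff.mpr ⟨z, ?_⟩
      have := congrArg (Subtype.val) hz
      rw [SubgroupClass.coe_zpow] at this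
      exact this
  have hord : orderOf (x : G) = q := by rw [← Nat.card_zpowers, hzp, hcard]
  refine ⟨x, hzp, hord, ?_⟩
  refine hspec _ x.2 ?_
  intro h1
  rw [h1, orderOf_one] at hord
  exact hq.one_lt.ne' hord.symm

lemma zpowers_pow_eq (hq : q.Prime) (g : G) (hord : orderOf g = q) (v : ℕ) (hv : ¬ q ∣ v) :
    Subgroup.zpowers (g ^ v) = Subgroup.zpowers g := by
  haveI : NeZero q := ⟨hq.ne_zero⟩
  haveI : Fact q.Prime := ⟨hq⟩
  apply le_antisymm
  · exact Subgroup.zpowers_le.mpr (Subgroup.pow_mem _ (Subgroup.mem_zpowers g) v)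
  · apply Subgroup.zpowers_le.mpr
    have hv0 : (v : ZMod q) ≠ 0 := fun h => hv ((ZMod.natCast_eq_zero_iff v q).mp h)
    set w := ((v : ZMod q)⁻¹).val with hw
    have hmod : v * w ≡ 1 [MOD q] := by
      have h2 : ((v * w : ℕ) : ZMod q) = ((1:ℕ) : ZMod q) := by
        push_cast
        rw [hw, ZMod.natCast_val, ZMod.cast_id, mul_inv_cancel₀ hv0]
      exact (ZMod.natCast_eq_natCast_iff _ _ _).mp h2
    have h1 : (g ^ v) ^ w = g := by
      have h3 : g ^ (v * w) = g ^ 1 := by rw [pow_eq_pow_iff_modEq, hord]; exact hmod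
      rw [← pow_mul, h3, pow_one]
    have h4 := Subgroup.pow_mem _ (Subgroup.mem_zpowers (g ^ v)) w
    rwa [h1] at h4

end SubgroupLemmas



theorem stmt15 (p q : ℕ) (hp : p.Prime) (hq : q.Prime) (hne : p ≠ q) (hpq : ¬ p ∣ (q - 1)) :
    Nat.card {c : ConjClasses (Matrix.specialUnitaryGroup (Fin p) ℂ) //
      ∃ g : Matrix.specialUnitaryGroup (Fin p) ℂ,
        ConjClasses.mk g = c ∧ orderOf g = q ∧
          (1 : ℂ) ∉ spectrum ℂ (g : Matrix (Fin p) (Fin p) ℂ)} =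
    (q - 1) * SpCG p q := by
  classical
  haveI : Fact q.Prime := ⟨hq⟩
  haveI : NeZero q := ⟨hq.ne_zero⟩
  let r : {F : Subgroup (Matrix.specialUnitaryGroup (Fin p) ℂ) // IsSpecialSubgroup q F} →
      {F : Subgroup (Matrix.specialUnitaryGroup (Fin p) ℂ) // IsSpecialSubgroup q F} → Prop :=
    fun F₁ F₂ => ∃ g : Matrix.specialUnitaryGroup (Fin p) ℂ,
      Subgroup.map (MulAut.conj g).toMonoidHom F₁.1 = F₂.1
  have hrequiv : Equivalence r := by
    constructor
    · intro F; exact ⟨1, conj_map_one F.1⟩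
    · rintro F₁ F₂ ⟨g, hg⟩
      refine ⟨g⁻¹, ?_⟩
      rw [← hg, conj_map_map, inv_mul_cancel, conj_map_one]
    · rintro F₁ F₂ F₃ ⟨g, hg⟩ ⟨h, hh⟩
      exact ⟨h * g, by rw [← hh, ← hg, conj_map_map]⟩
  have hquot : ∀ F₁ F₂, Quot.mk r F₁ = Quot.mk r F₂ ↔ r F₁ F₂ :=
    fun F₁ F₂ => Quot.eq.trans (hrequiv.eqvGen_iff)
  choose rep hrep using fun b : Quot r => Quot.exists_rep b
  choose gen hgen1 hgen2 hgen3 using fun b : Quot r => exists_gen hq (rep b).1 (rep b).2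
  have hval0 : ∀ k : (ZMod q)ˣ, (((k : ZMod q).val : ℕ) : ZMod q) = (k : ZMod q) := fun k => by
    rw [ZMod.natCast_val, ZMod.cast_id]
  have hvne : ∀ k : (ZMod q)ˣ, ¬ q ∣ (k : ZMod q).val := by
    intro k hdvd
    have h1 : (((k : ZMod q).val : ℕ) : ZMod q) = 0 :=
      (ZMod.natCast_eq_zero_iff _ q).mpr hdvd
    rw [hval0 k] at h1
    exact k.ne_zero h1
  have hpowne : ∀ (b : Quot r) (k : (ZMod q)ˣ), gen b ^ (k : ZMod q).val ≠ 1 := by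
    intro b k h1
    have h2 : orderOf (gen b) ∣ (k : ZMod q).val := orderOf_dvd_of_pow_eq_one h1
    rw [hgen2 b] at h2
    exact hvne k h2
  let Φ : (ZMod q)ˣ × Quot r → {c : ConjClasses (Matrix.specialUnitaryGroup (Fin p) ℂ) //
      ∃ g : Matrix.specialUnitaryGroup (Fin p) ℂ, ConjClasses.mk g = c ∧ orderOf g = q ∧
        (1 : ℂ) ∉ spectrum ℂ (g : Matrix (Fin p) (Fin p) ℂ)} := fun kb =>
    ⟨ConjClasses.mk (gen kb.2 ^ ((kb.1 : ZMod q)).val),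
      gen kb.2 ^ ((kb.1 : ZMod q)).val, rfl,
      (su_pow_order_spec hq _ (hgen2 kb.2) (hgen3 kb.2) _ (hpowne kb.2 kb.1)).1,
      (su_pow_order_spec hq _ (hgen2 kb.2) (hgen3 kb.2) _ (hpowne kb.2 kb.1)).2⟩
  have hinj : Function.Injective Φ := by
    rintro ⟨k, b⟩ ⟨k', b'⟩ h
    have h1 : ConjClasses.mk (gen b ^ (k : ZMod q).val)
        = ConjClasses.mk (gen b' ^ (k' : ZMod q).val) := congrArg Subtype.val h
    have hc : IsConj (gen b ^ (k : ZMod q).val) (gen b' ^ (k' : ZMod q).val) :=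
      ConjClasses.mk_eq_mk_iff_isConj.mp h1
    obtain ⟨cu, hcu⟩ := isConj_iff.mp hc
    have hFb : r (rep b) (rep b') := by
      refine ⟨cu, ?_⟩
      rw [← hgen1 b, ← hgen1 b']
      rw [← zpowers_pow_eq hq (gen b) (hgen2 b) _ (hvne k),
        ← zpowers_pow_eq hq (gen b') (hgen2 b') _ (hvne k')]
      rw [MonoidHom.map_zpowers]
      congr 1
    have hbb : b = b' := by rw [← hrep b, ← hrep b', hquot]; exact hFb
    subst hbb
    set v := (k : ZMod q).val with hv
    set v' := (k' : ZMod q).val with hv'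
    set m := ((k⁻¹ * k' : (ZMod q)ˣ) : ZMod q).val with hm
    have hg0m : (gen b ^ v) ^ m = gen b ^ v' := by
      rw [← pow_mul]
      have h3 : v * m ≡ v' [MOD q] := by
        have h4 : ((v * m : ℕ) : ZMod q) = ((v' : ℕ) : ZMod q) := by
          push_cast
          rw [hv, hm, hv', hval0 k, hval0 (k⁻¹ * k'), hval0 k']
          rw [← Units.val_mul, ← mul_assoc, mul_inv_cancel, one_mul]
        exact (ZMod.natCast_eq_natCast_iff _ _ _).mp h4
      rw [pow_eq_pow_iff_modEq, hgen2 b]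
      exact h3
    have hconj2 : IsConj (gen b ^ v) ((gen b ^ v) ^ m) := by
      rw [hg0m]; exact isConj_iff.mpr ⟨cu, hcu⟩
    have heq := su_conj_pow_eq hp hq hpq (gen b ^ v)
      (su_pow_order_spec hq _ (hgen2 b) (hgen3 b) _ (hpowne b k)).1
      (su_pow_order_spec hq _ (hgen2 b) (hgen3 b) _ (hpowne b k)).2 m hconj2
    have hvv : gen b ^ v' = gen b ^ v := by rw [← hg0m, heq]
    have hmod : v' ≡ v [MOD q] := by
      have h6 := pow_eq_pow_iff_modEq.mp hvv
      rwa [hgen2 b] at h6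
    have hkk : k = k' := by
      have h5 : ((v' : ℕ) : ZMod q) = ((v : ℕ) : ZMod q) :=
        (ZMod.natCast_eq_natCast_iff _ _ _).mpr hmod
      rw [hv', hv, hval0 k', hval0 k] at h5
      exact (Units.ext h5).symm
    rw [hkk]
  have hsurj : Function.Surjective Φ := by
    rintro ⟨c, g, hgc, hgord, hgspec⟩
    have hFs : IsSpecialSubgroup q (Subgroup.zpowers g) := special_of_gen hq g hgord hgspec
    set b : Quot r := Quot.mk r ⟨Subgroup.zpowers g, hFs⟩ with hb
    have h2 : r (rep b) ⟨Subgroup.zpowers g, hFs⟩ := by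
      rw [← hquot, hrep b]
    obtain ⟨h, hh⟩ := h2
    set x : Matrix.specialUnitaryGroup (Fin p) ℂ :=
      (MulAut.conj h).toMonoidHom (gen b) with hx
    have hxz : Subgroup.zpowers x = Subgroup.zpowers g := by
      rw [hx, ← MonoidHom.map_zpowers, hgen1 b]
      exact hh
    have hxord : orderOf x = q := by
      rw [hx, orderOf_injective (MulAut.conj h).toMonoidHom (MulAut.conj h).injective (gen b)]
      exact hgen2 b
    have hgmem : g ∈ Subgroup.zpowers x := by rw [hxz]; exact Subgroup.mem_zpowers g
    obtain ⟨n, hn⟩ := su_mem_zpowers_nat hq hxord hgmem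
    have hg1 : g ≠ 1 := by
      intro h1
      rw [h1, orderOf_one] at hgord
      exact hq.one_lt.ne' hgord.symm
    have hn0 : (n : ZMod q) ≠ 0 := by
      intro h1
      have hqn : q ∣ n := (ZMod.natCast_eq_zero_iff n q).mp h1
      have h7 : x ^ n = 1 := orderOf_dvd_iff_pow_eq_one.mp (by rw [hxord]; exact hqn)
      exact hg1 (by rw [← hn, h7])
    set k : (ZMod q)ˣ := (Ne.isUnit hn0).unit with hk
    have hkn : (k : ZMod q) = (n : ZMod q) := (Ne.isUnit hn0).unit_spec
    refine ⟨(k, b), ?_⟩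
    apply Subtype.ext
    show ConjClasses.mk (gen b ^ (k : ZMod q).val) = c
    rw [← hgc]
    apply ConjClasses.mk_eq_mk_iff_isConj.mpr
    have hxv : x ^ (k : ZMod q).val = g := by
      have hmod : (k : ZMod q).val ≡ n [MOD q] := by
        apply (ZMod.natCast_eq_natCast_iff _ _ _).mp
        rw [hval0 k, hkn]
      have h8 : x ^ (k : ZMod q).val = x ^ n := by
        rw [pow_eq_pow_iff_modEq, hxord]; exact hmod
      rw [h8, hn]
    refine isConj_iff.mpr ⟨h, ?_⟩
    calc h * (gen b ^ (k : ZMod q).val) * h⁻¹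
        = (MulAut.conj h).toMonoidHom (gen b ^ (k : ZMod q).val) := rfl
      _ = ((MulAut.conj h).toMonoidHom (gen b)) ^ (k : ZMod q).val := by rw [map_pow]
      _ = x ^ (k : ZMod q).val := by rw [hx]
      _ = g := hxv
  have hcardA := Nat.card_congr (Equiv.ofBijective Φ ⟨hinj, hsurj⟩)
  have hU : Nat.card (ZMod q)ˣ = q - 1 := by
    rw [Nat.card_eq_fintype_card, ZMod.card_units_eq_totient, Nat.totient_prime hq]
  have hSp : SpCG p q = Nat.card (Quot r) := rfl
  rw [← hcardA, Nat.card_prod, hU, hSp]
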